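/- Let V be a finite-dimensional complex vector space with a nondegenerate alternating bilinear form ω, let e ∈ V be nonzero, and let U be a hyperplane of V with V = U ⊕ ℂ·e. Then every linear automorphism g of V with determinant 1 factors as g = s ∘ h, where s is a symplectic automorphism of (V, ω) (hence det s = 1) and h is a linear automorphism of V with determinant 1 satisfying h(e) = e and h(U) = U. (Group factorization SL(V) = Sp(V) · SL_{dim V − 1}.) -/

import Mathlib

open LinearMap (BilinForm)

open Polynomial

set_option linter.unusedSectionVars false

lemma det_one_add_of_sq_zero {n : ℕ} (M : Matrix (Fin n) (Fin n) ℂ) (hM : M * M = 0) :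
    (1 + M).det = 1 := by
  have hnil : IsNilpotent M := ⟨2, by rw [pow_two, hM]⟩
  have hcp : M.charpoly = X ^ n := by
    have h := Matrix.isNilpotent_charpoly_sub_pow_of_isNilpotent hnil
    have h0 := h.eq_zero
    rw [sub_eq_zero] at h0
    simpa using h0
  have heval : (M.charpoly).eval (-1 : ℂ) = Matrix.det ((-1 : ℂ) • 1 - M) := by
    rw [Matrix.charpoly, ← coe_evalRingHom, RingHom.map_det]
    congr 1
    ext i j
    rcases eq_or_ne i j with rfl | hij
    · simp [Matrix.charmatrix_apply_eq]
    · simp [Matrix.charmatrix_apply_ne _ _ _ hij, Matrix.one_apply_ne hij]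
  have h1 : ((-1 : ℂ) • 1 - M) = (-1 : ℂ) • (1 + M) := by
    rw [smul_add, neg_one_smul (R := ℂ) (M : Matrix (Fin n) (Fin n) ℂ), ← sub_eq_add_neg]
  have h2 : (M.charpoly).eval (-1 : ℂ) = (-1 : ℂ) ^ n := by rw [hcp]; simp
  rw [heval, h1, Matrix.det_smul, Fintype.card_fin] at h2
  have hne : ((-1 : ℂ) ^ n) ≠ 0 := by simp
  exact mul_left_cancel₀ hne (h2.trans (mul_one _).symm)

lemma det_id_add_of_sq_zero {V : Type*} [AddCommGroup V] [Module ℂ V]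
    [FiniteDimensional ℂ V] (f : V →ₗ[ℂ] V) (hf : f ∘ₗ f = 0) :
    LinearMap.det (LinearMap.id + f) = 1 := by
  classical
  let b := Module.finBasis ℂ V
  have hM : (LinearMap.toMatrix b b f) * (LinearMap.toMatrix b b f) = 0 := by
    rw [← LinearMap.toMatrix_comp b b b, hf, map_zero]
  calc LinearMap.det (LinearMap.id + f)
      = Matrix.det (LinearMap.toMatrix b b (LinearMap.id + f)) := by
        rw [LinearMap.det_toMatrix]
    _ = 1 := by rw [map_add, LinearMap.toMatrix_id]; exact det_one_add_of_sq_zero _ hM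

section Transvection

variable {V : Type*} [AddCommGroup V] [Module ℂ V] [FiniteDimensional ℂ V]
variable (ω : LinearMap.BilinForm ℂ V)

/-- The rank-one nilpotent part of a symplectic transvection. -/
noncomputable def trvN (u : V) (c : ℂ) : V →ₗ[ℂ] V := c • (ω u).smulRight u

lemma trvN_apply (u : V) (c : ℂ) (x : V) : trvN ω u c x = (c * ω u x) • u := by
  simp [trvN, smul_smul]

variable (halt : ∀ v : V, ω v v = 0)
include halt

lemma skew (a b : V) : ω a b = - ω b a := by
  have h := halt (a + b)
  simp only [map_add, LinearMap.add_apply, halt a, halt b, zero_add, add_zero] at h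
  linear_combination h

lemma trvN_sq (u : V) (c : ℂ) : trvN ω u c ∘ₗ trvN ω u c = 0 := by
  ext x
  simp [trvN_apply, halt u]

lemma trvN_sq_apply (u : V) (c : ℂ) (x : V) : trvN ω u c (trvN ω u c x) = 0 := by
  simp [trvN_apply, halt u]

/-- Symplectic transvection. -/
noncomputable def trv (u : V) (c : ℂ) : V ≃ₗ[ℂ] V :=
  LinearEquiv.ofLinear (LinearMap.id + trvN ω u c) (LinearMap.id - trvN ω u c)
    (by
      ext x
      simp only [LinearMap.coe_comp, Function.comp_apply, LinearMap.add_apply,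
        LinearMap.sub_apply, LinearMap.id_apply, map_sub, trvN_sq_apply ω halt, LinearMap.id_coe,
        id_eq, sub_zero]
      abel)
    (by
      ext x
      simp only [LinearMap.coe_comp, Function.comp_apply, LinearMap.add_apply,
        LinearMap.sub_apply, LinearMap.id_apply, map_add, trvN_sq_apply ω halt, LinearMap.id_coe,
        id_eq, add_zero]
      abel)

lemma trv_apply (u : V) (c : ℂ) (x : V) : trv ω halt u c x = x + (c * ω u x) • u := by
  simp [trv, trvN_apply]

lemma trv_fix (u : V) (c : ℂ) (x : V) (h : ω u x = 0) : trv ω halt u c x = x := by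
  simp [trv_apply, h]

lemma trv_symp (u : V) (c : ℂ) (x y : V) :
    ω (trv ω halt u c x) (trv ω halt u c y) = ω x y := by
  have hs := skew ω halt x u
  simp only [trv_apply, map_add, map_smul, LinearMap.add_apply, LinearMap.smul_apply,
    smul_eq_mul]
  rw [halt u, hs]
  ring

lemma trv_det (u : V) (c : ℂ) : LinearMap.det (trv ω halt u c : V →ₗ[ℂ] V) = 1 := by
  have : (trv ω halt u c : V →ₗ[ℂ] V) = LinearMap.id + trvN ω u c := rfl
  rw [this]
  exact det_id_add_of_sq_zero _ (trvN_sq ω halt u c)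

end Transvection

set_option linter.unusedSectionVars false

section Transitivity

variable {V : Type*} [AddCommGroup V] [Module ℂ V] [FiniteDimensional ℂ V]
variable (ω : LinearMap.BilinForm ℂ V) (halt : ∀ v : V, ω v v = 0)
include halt

/-- One transvection moving `x` to `y`, fixing everything `ω (y - x)`-orthogonal. -/
lemma exists_trv_map (x y : V) (h : ω y x ≠ 0) :
    ∃ s : V ≃ₗ[ℂ] V, (∀ a b : V, ω (s a) (s b) = ω a b) ∧
      LinearMap.det (s : V →ₗ[ℂ] V) = 1 ∧ s x = y ∧
      ∀ v : V, ω (y - x) v = 0 → s v = v := by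
  refine ⟨trv ω halt (y - x) (ω y x)⁻¹, trv_symp ω halt _ _, trv_det ω halt _ _, ?_, ?_⟩
  · rw [trv_apply]
    rw [map_sub]
    simp only [LinearMap.sub_apply, halt x, sub_zero]
    rw [inv_mul_cancel₀ h, one_smul]
    abel
  · intro v hv
    exact trv_fix ω halt _ _ _ hv

/-- Composition of two good maps is good. -/
lemma good_trans (s₁ s₂ : V ≃ₗ[ℂ] V)
    (h₁ : (∀ a b : V, ω (s₁ a) (s₁ b) = ω a b) ∧ LinearMap.det (s₁ : V →ₗ[ℂ] V) = 1)
    (h₂ : (∀ a b : V, ω (s₂ a) (s₂ b) = ω a b) ∧ LinearMap.det (s₂ : V →ₗ[ℂ] V) = 1) :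
    (∀ a b : V, ω ((s₁ ≪≫ₗ s₂) a) ((s₁ ≪≫ₗ s₂) b) = ω a b) ∧
      LinearMap.det ((s₁ ≪≫ₗ s₂ : V ≃ₗ[ℂ] V) : V →ₗ[ℂ] V) = 1 := by
  constructor
  · intro a b
    simp only [LinearEquiv.trans_apply]
    rw [h₂.1, h₁.1]
  · rw [LinearEquiv.coe_trans, LinearMap.det_comp, h₁.2, h₂.2, mul_one]

variable (hnd : ω.Nondegenerate)
include hnd

lemma exists_pairing (x : V) (hx : x ≠ 0) : ∃ z : V, ω x z ≠ 0 := by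
  by_contra hz
  push_neg at hz
  exact hx (hnd.1 x hz)

/-- Transitivity of transvection products on nonzero vectors. -/
lemma exists_symp_vec (x y : V) (hx : x ≠ 0) (hy : y ≠ 0) :
    ∃ s : V ≃ₗ[ℂ] V, (∀ a b : V, ω (s a) (s b) = ω a b) ∧
      LinearMap.det (s : V →ₗ[ℂ] V) = 1 ∧ s x = y := by
  by_cases h : ω y x ≠ 0
  · obtain ⟨s, h1, h2, h3, -⟩ := exists_trv_map ω halt x y h
    exact ⟨s, h1, h2, h3⟩
  · push_neg at h
    -- find z with ω z x ≠ 0 and ω z y ≠ 0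
    obtain ⟨a, ha⟩ := exists_pairing ω halt hnd x hx
    obtain ⟨b, hb⟩ := exists_pairing ω halt hnd y hy
    obtain ⟨z, hzx, hzy⟩ : ∃ z : V, ω z x ≠ 0 ∧ ω z y ≠ 0 := by
      by_cases hya : ω y a ≠ 0
      · refine ⟨a, ?_, ?_⟩
        · rw [skew ω halt a x]; simpa using ha
        · rw [skew ω halt a y]; simpa using hya
      · push_neg at hya
        by_cases hxb : ω x b ≠ 0
        · refine ⟨b, ?_, ?_⟩
          · rw [skew ω halt b x]; simpa using hxb
          · rw [skew ω halt b y]; simpa using hb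
        · push_neg at hxb
          refine ⟨a + b, ?_, ?_⟩
          · rw [map_add, LinearMap.add_apply, skew ω halt a x, skew ω halt b x, hxb]
            simpa using ha
          · rw [map_add, LinearMap.add_apply, skew ω halt a y, skew ω halt b y, hya]
            simpa using hb
    obtain ⟨s₁, h11, h12, h13, -⟩ := exists_trv_map ω halt x z hzx
    have hyz : ω y z ≠ 0 := by
      rw [skew ω halt y z]
      simpa using hzy
    obtain ⟨s₂, h21, h22, h23, -⟩ := exists_trv_map ω halt z y hyz
    refine ⟨s₁ ≪≫ₗ s₂, ?_, ?_, ?_⟩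
    · exact (good_trans ω halt s₁ s₂ ⟨h11, h12⟩ ⟨h21, h22⟩).1
    · exact (good_trans ω halt s₁ s₂ ⟨h11, h12⟩ ⟨h21, h22⟩).2
    · simp [LinearEquiv.trans_apply, h13, h23]

omit hnd

/-- Transitivity on hyperbolic partners of a fixed vector `e`. -/
lemma exists_symp_pair (e w w' : V) (hwe : ω w e = 1) (hw'e : ω w' e = 1) :
    ∃ s : V ≃ₗ[ℂ] V, (∀ a b : V, ω (s a) (s b) = ω a b) ∧
      LinearMap.det (s : V →ₗ[ℂ] V) = 1 ∧ s e = e ∧ s w = w' := by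
  by_cases h : ω w' w ≠ 0
  · obtain ⟨s, h1, h2, h3, h4⟩ := exists_trv_map ω halt w w' h
    refine ⟨s, h1, h2, ?_, h3⟩
    apply h4
    rw [map_sub, LinearMap.sub_apply, hwe, hw'e, sub_self]
  · push_neg at h
    set w'' := w' + e with hw''
    have hw''w : ω w'' w ≠ 0 := by
      rw [hw'', map_add, LinearMap.add_apply, h, zero_add, skew ω halt e w, hwe]
      simp
    have hw''e : ω w'' e = 1 := by
      rw [hw'', map_add, LinearMap.add_apply, hw'e, halt e, add_zero]
    obtain ⟨s₁, h11, h12, h13, h14⟩ := exists_trv_map ω halt w w'' hw''w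
    have hw'w'' : ω w' w'' ≠ 0 := by
      rw [hw'', map_add, halt w', zero_add, hw'e]
      exact one_ne_zero
    obtain ⟨s₂, h21, h22, h23, h24⟩ := exists_trv_map ω halt w'' w' hw'w''
    refine ⟨s₁ ≪≫ₗ s₂, (good_trans ω halt s₁ s₂ ⟨h11, h12⟩ ⟨h21, h22⟩).1,
      (good_trans ω halt s₁ s₂ ⟨h11, h12⟩ ⟨h21, h22⟩).2, ?_, ?_⟩
    · have f1 : s₁ e = e := by
        apply h14
        rw [map_sub, LinearMap.sub_apply, hwe, hw''e, sub_self]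
      have f2 : s₂ e = e := by
        apply h24
        rw [map_sub, LinearMap.sub_apply, hw'e, hw''e, sub_self]
      simp [LinearEquiv.trans_apply, f1, f2]
    · simp [LinearEquiv.trans_apply, h13, h23]

end Transitivity

section DualVec

variable {V : Type*} [AddCommGroup V] [Module ℂ V] [FiniteDimensional ℂ V]
variable (ω : LinearMap.BilinForm ℂ V) (hnd : ω.Nondegenerate)
include hnd

/-- Given a hyperplane `W` complementary to the line through `e`, produce `w` with
`ω w e = 1` vanishing on `W`. -/
lemma exists_dual_vec (e : V) (he : e ≠ 0) (W : Submodule ℂ V)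
    (hW : IsCompl W (Submodule.span ℂ {e})) :
    ∃ w : V, ω w e = 1 ∧ ∀ x ∈ W, ω w x = 0 := by
  -- a functional equal to 1 at e
  obtain ⟨z, hz⟩ : ∃ z : V, ω e z ≠ 0 := by
    by_contra hz; push_neg at hz; exact he (hnd.1 e hz)
  set φ : Module.Dual ℂ V := (ω e z)⁻¹ • ω.flip z with hφdef
  have hφ : φ e = 1 := by
    simp only [hφdef, LinearMap.smul_apply, LinearMap.flip_apply, smul_eq_mul]
    exact inv_mul_cancel₀ hz
  -- the projection onto the line through e along W
  set π := Submodule.linearProjOfIsCompl _ _ hW.symm with hπdef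
  set f : Module.Dual ℂ V := φ ∘ₗ (Submodule.span ℂ {e}).subtype ∘ₗ π with hfdef
  have hfe : f e = 1 := by
    have : π e = ⟨e, Submodule.mem_span_singleton_self e⟩ :=
      Submodule.linearProjOfIsCompl_apply_left hW.symm ⟨e, Submodule.mem_span_singleton_self e⟩
    simp [hfdef, this, hφ]
  have hfW : ∀ x ∈ W, f x = 0 := by
    intro x hx
    have : π x = 0 := Submodule.projectionOnto_apply_of_mem_right hW.symm hx
    simp [hfdef, this]
  refine ⟨(ω.toDual hnd).symm f, ?_, ?_⟩
  · have h := LinearEquiv.apply_symm_apply (ω.toDual hnd) f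
    have h2 : ω ((ω.toDual hnd).symm f) e = (ω.toDual hnd ((ω.toDual hnd).symm f)) e := rfl
    rw [h2, h, hfe]
  · intro x hx
    have h := LinearEquiv.apply_symm_apply (ω.toDual hnd) f
    have h2 : ω ((ω.toDual hnd).symm f) x = (ω.toDual hnd ((ω.toDual hnd).symm f)) x := rfl
    rw [h2, h, hfW x hx]

end DualVec

/-- Group factorization `SL(V) = Sp(V) · SL_{dim V − 1}` (first row of
Onishchik's Table O): every determinant-one automorphism `g` of `V` factors as
`g = s ∘ h` with `s` symplectic and `h` of determinant one fixing `e` and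
stabilizing the complementary hyperplane `U`. -/
theorem SL_eq_Sp_mul_SL_factorization
    (V : Type*) [AddCommGroup V] [Module ℂ V] [FiniteDimensional ℂ V]
    (ω : BilinForm ℂ V) (halt : ∀ v : V, ω v v = 0) (hnd : ω.Nondegenerate)
    (e : V) (he : e ≠ 0) (U : Submodule ℂ V) (hc : IsCompl U (Submodule.span ℂ {e})) :
    ∀ g : V ≃ₗ[ℂ] V, LinearMap.det (g : V →ₗ[ℂ] V) = 1 →
      ∃ s h : V ≃ₗ[ℂ] V,
        (∀ a b : V, ω (s a) (s b) = ω a b) ∧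
        LinearMap.det (h : V →ₗ[ℂ] V) = 1 ∧
        h e = e ∧
        Submodule.map (h : V →ₗ[ℂ] V) U = U ∧
        ∀ v : V, g v = s (h v) := by
  intro g hg
  classical
  have hge : g e ≠ 0 := fun h0 => he (by simpa using (LinearEquiv.map_eq_zero_iff g).mp h0)
  -- Step 1 : symplectic s₁ with s₁ e = g e
  obtain ⟨s₁, hs₁symp, hs₁det, hs₁e⟩ := exists_symp_vec ω halt hnd e (g e) he hge
  set h₁ : V ≃ₗ[ℂ] V := g ≪≫ₗ s₁.symm with hh₁def
  have hh₁e : h₁ e = e := by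
    rw [hh₁def]
    simp only [LinearEquiv.trans_apply]
    rw [LinearEquiv.symm_apply_eq, hs₁e]
  set U' : Submodule ℂ V := Submodule.map (h₁ : V →ₗ[ℂ] V) U with hU'def
  -- U' is complementary to the line through e
  have hcompl' : IsCompl U' (Submodule.span ℂ {e}) := by
    have h := (Submodule.orderIsoMapComap h₁).isCompl hc
    have h2 : Submodule.orderIsoMapComap h₁ (Submodule.span ℂ {e}) = Submodule.span ℂ {e} := by
      show Submodule.map (h₁ : V →ₗ[ℂ] V) (Submodule.span ℂ {e}) = Submodule.span ℂ {e}
      rw [Submodule.map_span, Set.image_singleton]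
      show Submodule.span ℂ {h₁ e} = _
      rw [hh₁e]
    rwa [h2] at h
  -- dual vectors for U and U'
  obtain ⟨w, hwe, hwU⟩ := exists_dual_vec ω hnd e he U hc
  obtain ⟨w', hw'e, hw'U'⟩ := exists_dual_vec ω hnd e he U' hcompl'
  -- Step 2 : symplectic s₂ fixing e with s₂ w = w'
  obtain ⟨s₂, hs₂symp, hs₂det, hs₂e, hs₂w⟩ := exists_symp_pair ω halt e w w' hwe hw'e
  -- finrank bookkeeping
  have hranks : Module.finrank ℂ U + 1 = Module.finrank ℂ V := by
    rw [← Submodule.finrank_add_eq_of_isCompl hc, finrank_span_singleton he]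
  have hrankU' : Module.finrank ℂ U' = Module.finrank ℂ U :=
    LinearEquiv.finrank_map_eq h₁ U
  -- U' equals the kernel of ω w'
  have hU'ker : U' = LinearMap.ker (ω w') := by
    have hle : U' ≤ LinearMap.ker (ω w') := fun x hx => LinearMap.mem_ker.mpr (hw'U' x hx)
    have hne : (ω w' : Module.Dual ℂ V) ≠ 0 := by
      intro h0
      rw [h0] at hw'e
      simp at hw'e
    have hker : Module.finrank ℂ (LinearMap.ker (ω w')) + 1 = Module.finrank ℂ V :=
      Module.Dual.finrank_ker_add_one_of_ne_zero hne
    exact Submodule.eq_of_le_of_finrank_le hle (by omega)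
  -- s₂ maps U to U'
  have hs₂U : Submodule.map (s₂ : V →ₗ[ℂ] V) U = U' := by
    have hle : Submodule.map (s₂ : V →ₗ[ℂ] V) U ≤ U' := by
      rintro x ⟨u, hu, rfl⟩
      rw [hU'ker, LinearMap.mem_ker, LinearEquiv.coe_coe, ← hs₂w, hs₂symp w u]
      exact hwU u hu
    have hrk : Module.finrank ℂ (Submodule.map (s₂ : V →ₗ[ℂ] V) U) = Module.finrank ℂ U :=
      LinearEquiv.finrank_map_eq s₂ U
    exact Submodule.eq_of_le_of_finrank_le hle (by omega)
  -- assemble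
  refine ⟨s₂ ≪≫ₗ s₁, h₁ ≪≫ₗ s₂.symm, ?_, ?_, ?_, ?_, ?_⟩
  · intro a b
    simp only [LinearEquiv.trans_apply]
    rw [hs₁symp, hs₂symp]
  · -- determinant of h
    have hsymmdet : ∀ (t : V ≃ₗ[ℂ] V), LinearMap.det (t : V →ₗ[ℂ] V) = 1 →
        LinearMap.det (t.symm : V →ₗ[ℂ] V) = 1 := by
      intro t ht
      have hcomp : (t.symm : V →ₗ[ℂ] V) ∘ₗ (t : V →ₗ[ℂ] V) = LinearMap.id := by
        ext x; simp
      have := congrArg LinearMap.det hcomp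
      rw [LinearMap.det_comp, ht, mul_one, LinearMap.det_id] at this
      exact this
    rw [LinearEquiv.coe_trans, LinearMap.det_comp, hh₁def, LinearEquiv.coe_trans,
      LinearMap.det_comp, hg, hsymmdet s₁ hs₁det, hsymmdet s₂ hs₂det]
    ring
  · simp only [LinearEquiv.trans_apply, hh₁e]
    rw [LinearEquiv.symm_apply_eq, hs₂e]
  · rw [LinearEquiv.coe_trans, Submodule.map_comp, ← hU'def]
    have h' : Submodule.map (s₂ : V →ₗ[ℂ] V) U = U' := hs₂U
    exact (Submodule.map_symm_eq_iff s₂).mpr h'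
  · intro v
    simp [hh₁def, LinearEquiv.trans_apply]
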